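/- Let p, n, m be integers with n ≥ m ≥ 0 and p ≥ n + 2m + 2. Let (B, R) be a partition of the edge set of the complete graph K_p into two color classes such that neither class contains a copy of the double star S(n,m). Then for every vertex v of K_p and each color class C ∈ {B, R}, the number of edges of C incident to v is at most n + m. -/

import Mathlib

open SimpleGraph Set

/-- `G` contains a copy of the double star `S(n,m)`. -/
def HasDoubleStar {V : Type*} (G : SimpleGraph V) (n m : ℕ) : Prop :=
  ∃ (u v : V) (A B : Finset V), G.Adj u v ∧
    ↑A ⊆ G.neighborSet u ∧ ↑B ⊆ G.neighborSet v ∧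
    v ∉ A ∧ u ∉ B ∧ Disjoint A B ∧ A.card = n ∧ B.card = m

/-- Ramsey number of the double star `S(n,m)`. -/
noncomputable def doubleStarRamsey (n m : ℕ) : ℕ :=
  sInf {N : ℕ | ∀ G : SimpleGraph (Fin N), HasDoubleStar G n m ∨ HasDoubleStar Gᶜ n m}

/-- `G` is a `(δ,η)`-graph. -/
def IsDEGraph {V : Type*} [Fintype V] (δ η : ℝ) (G : SimpleGraph V) : Prop :=
  1 < Fintype.card V ∧
  (∀ v : V, ((G.neighborSet v).ncard : ℝ) + 1 ≥ δ * Fintype.card V) ∧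
  (∀ u v : V, G.Adj u v →
    ((G.neighborSet u ∪ G.neighborSet v).ncard : ℝ) ≤ (1 - η) * Fintype.card V)

section Aux

variable {V : Type*} [Fintype V] [DecidableEq V]

lemma ncard_neighborSet (G : SimpleGraph V) [DecidableRel G.Adj] (v : V) :
    (G.neighborSet v).ncard = G.degree v := by
  have h := Set.ncard_coe_finset (G.neighborFinset v)
  rw [G.coe_neighborFinset] at h
  rw [h]
  rfl

/-- If `C` is `S(n,m)`-free and `uv` is a `C`-edge with `deg u ≥ n+m+1`, then `deg v ≤ m`. -/
lemma key (C : SimpleGraph V) [DecidableRel C.Adj] (n m : ℕ)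
    (h : ¬ HasDoubleStar C n m) {u v : V} (huv : C.Adj u v)
    (hu : n + m + 1 ≤ C.degree u) : C.degree v ≤ m := by
  by_contra hv
  push_neg at hv
  obtain ⟨B, hBsub, hBcard⟩ :=
    Finset.exists_subset_card_eq (s := C.neighborFinset v \ {u}) (n := m) (by
      have h1 := Finset.le_card_sdiff ({u} : Finset V) (C.neighborFinset v)
      have : m + 1 ≤ (C.neighborFinset v).card := hv
      simp only [Finset.card_singleton] at h1
      omega)
  obtain ⟨A, hAsub, hAcard⟩ :=
    Finset.exists_subset_card_eq (s := C.neighborFinset u \ insert v B) (n := n) (by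
      have h1 := Finset.le_card_sdiff (insert v B) (C.neighborFinset u)
      have h2 : (insert v B).card ≤ m + 1 := by
        have := Finset.card_insert_le v B; omega
      have : n + m + 1 ≤ (C.neighborFinset u).card := hu
      omega)
  refine h ⟨u, v, A, B, huv, ?_, ?_, ?_, ?_, ?_, hAcard, hBcard⟩
  · intro x hx
    have := hAsub (by simpa using hx)
    simp only [Finset.mem_sdiff, SimpleGraph.mem_neighborFinset] at this
    exact this.1
  · intro x hx
    have := hBsub (by simpa using hx)
    simp only [Finset.mem_sdiff, SimpleGraph.mem_neighborFinset] at this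
    exact this.1
  · intro hvA
    have := hAsub hvA
    simp [Finset.mem_insert] at this
  · intro huB
    have := hBsub huB
    simp at this
  · refine Finset.disjoint_left.mpr fun x hxA hxB => ?_
    have := hAsub hxA
    simp only [Finset.mem_sdiff, Finset.mem_insert] at this
    exact this.2 (Or.inr hxB)

lemma main_half (p n m : ℕ) (hp : n + 2*m + 2 ≤ p)
    (G : SimpleGraph (Fin p)) [DecidableRel G.Adj]
    (hG : ¬ HasDoubleStar G n m) (hGc : ¬ HasDoubleStar Gᶜ n m) (v : Fin p) :
    G.degree v ≤ n + m := by
  by_contra hv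
  push_neg at hv
  have hcard : Fintype.card (Fin p) = p := Fintype.card_fin p
  -- v has a neighbor u
  obtain ⟨u, hu⟩ : ∃ u, G.Adj v u := by
    rw [← SimpleGraph.degree_pos_iff_exists_adj]; omega
  rcases Nat.eq_zero_or_pos (n + m) with h0 | h0
  · exact hG ⟨v, u, ∅, ∅, hu, by simp, by simp, by simp, by simp, by simp, by simp; omega, by simp; omega⟩
  -- degree relations
  have hdegc : ∀ w : Fin p, Gᶜ.degree w = p - 1 - G.degree w := fun w => by
    rw [SimpleGraph.degree_compl, hcard]
  have hdlt : ∀ w : Fin p, G.degree w ≤ p - 1 := fun w => by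
    have := SimpleGraph.degree_lt_card_verts (G := G) w
    omega
  have hdeg : ∀ w : Fin p, G.degree w = p - 1 - Gᶜ.degree w := fun w => by
    have h1 := hdegc w
    have h2 := hdlt w
    omega
  -- u has small G-degree, hence large Gᶜ-degree
  have hum : G.degree u ≤ m := key G n m hG hu (by omega)
  have huc : n + m + 1 ≤ Gᶜ.degree u := by rw [hdegc]; omega
  -- every Gᶜ-neighbor x of u has Gᶜ-degree ≤ m, hence G-degree ≥ n+m+1
  have hXsmall : ∀ x, Gᶜ.Adj u x → Gᶜ.degree x ≤ m := fun x hx =>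
    key Gᶜ n m hGc hx huc
  have hXbig : ∀ x, Gᶜ.Adj u x → n + m + 1 ≤ G.degree x := fun x hx => by
    have h1 := hXsmall x hx
    have h2 : Gᶜ.degree x ≤ p - 1 := by rw [hdegc]; omega
    rw [hdeg]; omega
  -- pick x in X
  obtain ⟨x, hxX⟩ : ∃ x, x ∈ Gᶜ.neighborFinset u := by
    have : 0 < (Gᶜ.neighborFinset u).card := by
      have : Gᶜ.degree u = (Gᶜ.neighborFinset u).card := rfl
      omega
    exact Finset.card_pos.mp this
  rw [SimpleGraph.mem_neighborFinset] at hxX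
  -- all other members of X are Gᶜ-adjacent to x
  have hsub : insert u ((Gᶜ.neighborFinset u).erase x) ⊆ Gᶜ.neighborFinset x := by
    intro y hy
    rw [SimpleGraph.mem_neighborFinset]
    rcases Finset.mem_insert.mp hy with rfl | hy
    · exact hxX.symm
    · obtain ⟨hyx, hyX⟩ := Finset.mem_erase.mp hy
      rw [SimpleGraph.mem_neighborFinset] at hyX
      by_contra hadj
      have hGadj : G.Adj x y := by
        by_contra h
        exact hadj ((G.compl_adj x y).mpr ⟨Ne.symm hyx, h⟩)
      have := key G n m hG hGadj (hXbig x hxX)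
      have := hXbig y hyX
      omega
  have hucard : u ∉ (Gᶜ.neighborFinset u).erase x :=
    fun h => Gᶜ.notMem_neighborFinset_self u (Finset.mem_of_mem_erase h)
  have hxcount : n + m + 1 ≤ Gᶜ.degree x := by
    have h1 := Finset.card_le_card hsub
    rw [Finset.card_insert_of_notMem hucard,
        Finset.card_erase_of_mem (by rwa [SimpleGraph.mem_neighborFinset])] at h1
    have h2 : n + m + 1 ≤ (Gᶜ.neighborFinset u).card := huc
    have : Gᶜ.degree x = (Gᶜ.neighborFinset x).card := rfl
    omega
  have := hXsmall x hxX
  omega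

end Aux

theorem grossman_degree_bound (p n m : ℕ) (hnm : m ≤ n) (hp : n + 2*m + 2 ≤ p)
    (G : SimpleGraph (Fin p))
    (hfree : ¬ HasDoubleStar G n m ∧ ¬ HasDoubleStar Gᶜ n m) :
    ∀ v : Fin p, ∀ C ∈ ({G, Gᶜ} : Set (SimpleGraph (Fin p))),
      (C.neighborSet v).ncard ≤ n + m := by
  classical
  intro v C hC
  rcases hC with rfl | hC
  · rw [ncard_neighborSet]
    exact main_half p n m hp C hfree.1 hfree.2 v
  · rcases hC with rfl
    rw [ncard_neighborSet]
    exact main_half p n m hp Gᶜ hfree.2 (by rw [compl_compl]; exact hfree.1) v
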